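/- There is no graphon W, positive real c, and sequence of positive reals ε_i → 0 such that every weak ε_i-regular partition of W has at least 2^(c·ε_i^(-2)) parts. -/

import Mathlib

open MeasureTheory

/-- The ±1 vector associated with the part of `[0,1)` containing `x`, when `[0,1)` is
divided into `2^m` parts of equal length indexed by vectors in `{-1,+1}^m`. -/
noncomputable def cfVec (m : ℕ) (x : ℝ) : Fin m → ℝ :=
  fun i => if Nat.testBit ⌊x * 2 ^ m⌋₊ i then 1 else -1

/-- The Conlon–Fox step graphon: the value between the parts indexed by `u` and `u'` is
`1/2 + ⟨u,u'⟩/(4√m)` truncated to `[0,1]`. -/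
noncomputable def WCF (m : ℕ) (x y : ℝ) : ℝ :=
  max 0 (min 1 (1/2 + (∑ i : Fin m, cfVec m x i * cfVec m y i) / (4 * Real.sqrt m)))

/-- The (unnormalized) density between `A` and `B` in the graphon `W`. -/
noncomputable def graphonDensity (W : ℝ → ℝ → ℝ) (A B : Set ℝ) : ℝ :=
  ∫ p in A ×ˢ B, W p.1 p.2

/-- `U` is a partition of `[0,1]` into `k` measurable non-null parts that is
weak `ε`-regular for the graphon `W`. -/
def IsWeakRegularPartition (W : ℝ → ℝ → ℝ) (ε : ℝ) (k : ℕ) (U : Fin k → Set ℝ) : Prop :=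
  (∀ i, MeasurableSet (U i)) ∧ (∀ i, U i ⊆ Set.Icc 0 1) ∧
  (∀ i, 0 < (volume (U i)).toReal) ∧
  Pairwise (Function.onFun Disjoint U) ∧ (⋃ i, U i) = Set.Icc (0:ℝ) 1 ∧
  ∀ A B : Set ℝ, MeasurableSet A → MeasurableSet B →
    A ⊆ Set.Icc 0 1 → B ⊆ Set.Icc 0 1 →
    |graphonDensity W A B - ∑ i, ∑ j,
      graphonDensity W (U i) (U j) / ((volume (U i)).toReal * (volume (U j)).toReal)
        * (volume (U i ∩ A)).toReal * (volume (U j ∩ B)).toReal| ≤ ε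


namespace Aux
open Set


noncomputable def vol (S : Set ℝ) : ℝ := (volume S).toReal

variable {W : ℝ → ℝ → ℝ}

lemma vol_nonneg (S : Set ℝ) : 0 ≤ vol S := ENNReal.toReal_nonneg

lemma vol_ne_top {S : Set ℝ} (hS : S ⊆ Icc 0 1) : volume S ≠ ⊤ := by
  refine ne_top_of_le_ne_top ?_ (measure_mono hS)
  simp [Real.volume_Icc]

lemma prod_vol_ne_top {A B : Set ℝ} (hA : A ⊆ Icc 0 1) (hB : B ⊆ Icc 0 1) :
    volume (A ×ˢ B) ≠ ⊤ := by
  rw [Measure.volume_eq_prod, Measure.prod_prod]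
  exact ENNReal.mul_ne_top (vol_ne_top hA) (vol_ne_top hB)

lemma integrableOnProd (hm : Measurable (fun p : ℝ × ℝ => W p.1 p.2))
    (hb : ∀ x y, W x y ∈ Icc (0:ℝ) 1) {A B : Set ℝ}
    (hA : A ⊆ Icc 0 1) (hB : B ⊆ Icc 0 1) :
    IntegrableOn (fun p : ℝ × ℝ => W p.1 p.2) (A ×ˢ B) := by
  refine Integrable.mono' (g := fun _ => (1:ℝ)) ?_ hm.aestronglyMeasurable.restrict ?_
  · exact integrableOn_const (prod_vol_ne_top hA hB)
  · refine Filter.Eventually.of_forall fun p => ?_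
    have h := hb p.1 p.2
    rw [Real.norm_eq_abs, abs_le]
    exact ⟨by simpa using (by linarith [h.1] : (-1:ℝ) ≤ W p.1 p.2), by simpa using h.2⟩

lemma den_nonneg (hb : ∀ x y, W x y ∈ Icc (0:ℝ) 1) {A B : Set ℝ}
    (mA : MeasurableSet A) (mB : MeasurableSet B) :
    0 ≤ graphonDensity W A B :=
  setIntegral_nonneg (mA.prod mB) (fun p _ => (hb p.1 p.2).1)

lemma den_le_vol (hm : Measurable (fun p : ℝ × ℝ => W p.1 p.2))
    (hb : ∀ x y, W x y ∈ Icc (0:ℝ) 1) {A B : Set ℝ}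
    (mA : MeasurableSet A) (mB : MeasurableSet B)
    (hA : A ⊆ Icc 0 1) (hB : B ⊆ Icc 0 1) :
    graphonDensity W A B ≤ vol A * vol B := by
  have h1 : graphonDensity W A B ≤ ∫ _ in A ×ˢ B, (1:ℝ) := by
    refine setIntegral_mono_on (integrableOnProd hm hb hA hB)
      (integrableOn_const (prod_vol_ne_top hA hB)) (mA.prod mB) ?_
    exact fun p _ => (hb p.1 p.2).2
  calc graphonDensity W A B ≤ ∫ _ in A ×ˢ B, (1:ℝ) := h1
    _ = vol A * vol B := by
        rw [setIntegral_const, smul_eq_mul, mul_one, Measure.volume_eq_prod,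
          Measure.real, Measure.prod_prod, vol, vol, ENNReal.toReal_mul]




lemma vol_iUnion {ι : Type*} [Fintype ι] {X : ι → Set ℝ} (hm : ∀ i, MeasurableSet (X i))
    (hd : Pairwise (Function.onFun Disjoint X)) (hs : ∀ i, X i ⊆ Icc 0 1) :
    vol (⋃ i, X i) = ∑ i, vol (X i) := by
  rw [vol, measure_iUnion hd hm, tsum_fintype, ENNReal.toReal_sum
    (fun i _ => vol_ne_top (hs i))]; rfl

lemma prodAE {A A' B : Set ℝ} (h : A =ᵐ[volume] A') :
    (A ×ˢ B : Set (ℝ × ℝ)) =ᵐ[volume] (A' ×ˢ B) := by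
  rw [← measure_symmDiff_eq_zero_iff] at h ⊢
  refine measure_mono_null (t := (symmDiff A A') ×ˢ B) (fun p hp => ?_) ?_
  · exact (show p ∈ (symmDiff A A') ×ˢ B by
      rcases hp with ⟨⟨h1, h2⟩⟩ | ⟨h1, h2⟩
      · exact ⟨Or.inl ⟨h1.1, fun hc => h2 ⟨hc, h1.2⟩⟩, h1.2⟩
      · exact ⟨Or.inr ⟨h1.1, fun hc => h2 ⟨hc, h1.2⟩⟩, h1.2⟩)
  · rw [Measure.volume_eq_prod, Measure.prod_prod, h, zero_mul]

lemma prodAE' {A B B' : Set ℝ} (h : B =ᵐ[volume] B') :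
    (A ×ˢ B : Set (ℝ × ℝ)) =ᵐ[volume] (A ×ˢ B') := by
  rw [← measure_symmDiff_eq_zero_iff] at h ⊢
  refine measure_mono_null (t := A ×ˢ (symmDiff B B')) (fun p hp => ?_) ?_
  · exact (show p ∈ A ×ˢ (symmDiff B B') by
      rcases hp with ⟨⟨h1, h2⟩⟩ | ⟨h1, h2⟩
      · exact ⟨h1.1, Or.inl ⟨h1.2, fun hc => h2 ⟨h1.1, hc⟩⟩⟩
      · exact ⟨h1.1, Or.inr ⟨h1.2, fun hc => h2 ⟨h1.1, hc⟩⟩⟩)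
  · rw [Measure.volume_eq_prod, Measure.prod_prod, h, mul_zero]

lemma den_congr {A A' B B' : Set ℝ} (h : A =ᵐ[volume] A') (h' : B =ᵐ[volume] B') :
    graphonDensity W A B = graphonDensity W A' B' := by
  unfold graphonDensity
  rw [setIntegral_congr_set ((prodAE (B := B) h).trans (prodAE' h'))]

lemma den_empty_left (B : Set ℝ) : graphonDensity W ∅ B = 0 := by
  unfold graphonDensity; rw [Set.empty_prod, Measure.restrict_empty, integral_zero_measure]

lemma den_empty_right (A : Set ℝ) : graphonDensity W A ∅ = 0 := by
  unfold graphonDensity; rw [Set.prod_empty, Measure.restrict_empty, integral_zero_measure]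


lemma den_iUnion_left {ι : Type*} [Fintype ι]
    (hm : Measurable (fun p : ℝ × ℝ => W p.1 p.2)) (hb : ∀ x y, W x y ∈ Icc (0:ℝ) 1)
    {X : ι → Set ℝ} {B : Set ℝ} (hXm : ∀ i, MeasurableSet (X i))
    (hd : Pairwise (Function.onFun Disjoint X)) (hs : ∀ i, X i ⊆ Icc 0 1)
    (mB : MeasurableSet B) (hB : B ⊆ Icc 0 1) :
    graphonDensity W (⋃ i, X i) B = ∑ i, graphonDensity W (X i) B := by
  unfold graphonDensity
  rw [Set.iUnion_prod_const, integral_iUnion (fun i => (hXm i).prod mB)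
    (fun i j hij => Set.disjoint_prod.2 (Or.inl (hd hij)))
    (by rw [← Set.iUnion_prod_const]
        exact integrableOnProd hm hb (Set.iUnion_subset hs) hB), tsum_fintype]

lemma den_iUnion_right {ι : Type*} [Fintype ι]
    (hm : Measurable (fun p : ℝ × ℝ => W p.1 p.2)) (hb : ∀ x y, W x y ∈ Icc (0:ℝ) 1)
    {A : Set ℝ} {Y : ι → Set ℝ} (mA : MeasurableSet A) (hA : A ⊆ Icc 0 1)
    (hYm : ∀ j, MeasurableSet (Y j))
    (hd : Pairwise (Function.onFun Disjoint Y)) (hs : ∀ j, Y j ⊆ Icc 0 1) :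
    graphonDensity W A (⋃ j, Y j) = ∑ j, graphonDensity W A (Y j) := by
  unfold graphonDensity
  rw [Set.prod_iUnion, integral_iUnion (fun j => mA.prod (hYm j))
    (fun i j hij => Set.disjoint_prod.2 (Or.inr (hd hij)))
    (by rw [← Set.prod_iUnion]
        exact integrableOnProd hm hb hA (Set.iUnion_subset hs)), tsum_fintype]



lemma group_sum {ι τ : Type*} [Fintype ι] [Fintype τ] (c : ι → ι → ℝ)
    (w : ι × τ → ι × τ → ℝ) :
    ∑ p : ι × τ, ∑ q : ι × τ, c p.1 q.1 * w p q
      = ∑ i, ∑ j, c i j * ∑ s, ∑ t, w (i, s) (j, t) := by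
  rw [Fintype.sum_prod_type]
  refine Finset.sum_congr rfl fun i _ => ?_
  have e : ∀ s : τ, ∑ q : ι × τ, c i q.1 * w (i, s) q
      = ∑ j, ∑ t, c i j * w (i, s) (j, t) := fun s => by rw [Fintype.sum_prod_type]
  calc ∑ s, ∑ q : ι × τ, c i q.1 * w (i, s) q
      = ∑ s, ∑ j, ∑ t, c i j * w (i, s) (j, t) := Finset.sum_congr rfl fun s _ => e s
    _ = ∑ j, ∑ s, ∑ t, c i j * w (i, s) (j, t) := Finset.sum_comm
    _ = ∑ j, c i j * ∑ s, ∑ t, w (i, s) (j, t) := by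
        refine Finset.sum_congr rfl fun j _ => ?_
        rw [Finset.mul_sum]
        exact Finset.sum_congr rfl fun s _ => by rw [Finset.mul_sum]

lemma core {ι τ : Type*} [Fintype ι] [Fintype τ]
    (f : ι × τ → ℝ) (d : ι × τ → ι × τ → ℝ) (v : ι → ℝ) (D : ι → ι → ℝ)
    (α β : ι × τ → ℝ)
    (h1 : ∀ i, ∑ s : τ, f (i, s) = v i)
    (h2 : ∀ i j, ∑ s : τ, ∑ t : τ, d (i, s) (j, t) = D i j)
    (h3 : ∀ p q, 0 ≤ d p q) (h3' : ∀ p q, d p q ≤ f p * f q)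
    (h4 : ∀ p, 0 ≤ f p) (h5 : ∀ i, 0 < v i)
    (h6 : ∀ p, α p = 0 ∨ α p = 1) (h6' : ∀ p, β p = 0 ∨ β p = 1)
    (h7 : ∑ i, v i = 1) :
    (∑ p : ι × τ, ∑ q : ι × τ,
        α p * β q * (d p q - D p.1 q.1 / (v p.1 * v q.1) * f p * f q)) ^ 2
      + ∑ i, ∑ j, D i j ^ 2 / (v i * v j)
    ≤ ∑ p : ι × τ, ∑ q : ι × τ, d p q ^ 2 / (f p * f q) := by
  set r : ι → ι → ℝ := fun i j => D i j / (v i * v j) with hr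
  set E : ι × τ → ι × τ → ℝ := fun p q => d p q - r p.1 q.1 * f p * f q with hE
  have hvne : ∀ i j, v i * v j ≠ 0 := fun i j => (mul_pos (h5 i) (h5 j)).ne'
  have hEzero : ∀ p q, f p * f q = 0 → E p q = 0 := by
    intro p q h
    have hd : d p q = 0 := le_antisymm (h ▸ h3' p q) (h3 p q)
    have h0 : r p.1 q.1 * f p * f q = 0 := by
      rcases mul_eq_zero.1 h with h' | h' <;> simp [h']
    show d p q - r p.1 q.1 * f p * f q = 0
    rw [hd, h0, sub_zero]
  have key1 : ∀ p q, E p q ^ 2 / (f p * f q)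
      = d p q ^ 2 / (f p * f q) - 2 * r p.1 q.1 * d p q + r p.1 q.1 ^ 2 * (f p * f q) := by
    intro p q
    rcases eq_or_ne (f p * f q) 0 with h | h
    · have hd : d p q = 0 := le_antisymm (h ▸ h3' p q) (h3 p q)
      rw [hEzero p q h, h, hd]
      simp
    · show (d p q - r p.1 q.1 * f p * f q) ^ 2 / (f p * f q) = _
      obtain ⟨hfp, hfq⟩ := mul_ne_zero_iff.1 h
      field_simp
      ring
  have key2 : ∑ p : ι × τ, ∑ q : ι × τ, E p q ^ 2 / (f p * f q)
      = (∑ p : ι × τ, ∑ q : ι × τ, d p q ^ 2 / (f p * f q))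
        - ∑ i, ∑ j, D i j ^ 2 / (v i * v j) := by
    have e1 : ∑ p : ι × τ, ∑ q : ι × τ, E p q ^ 2 / (f p * f q)
        = ∑ p : ι × τ, ∑ q : ι × τ, (d p q ^ 2 / (f p * f q)
            - 2 * r p.1 q.1 * d p q + r p.1 q.1 ^ 2 * (f p * f q)) :=
      Finset.sum_congr rfl fun p _ => Finset.sum_congr rfl fun q _ => key1 p q
    have expand : ∑ p : ι × τ, ∑ q : ι × τ, (d p q ^ 2 / (f p * f q)
          - 2 * r p.1 q.1 * d p q + r p.1 q.1 ^ 2 * (f p * f q))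
        = (∑ p : ι × τ, ∑ q : ι × τ, d p q ^ 2 / (f p * f q))
          - (∑ p : ι × τ, ∑ q : ι × τ, (2 * r p.1 q.1) * d p q)
          + ∑ p : ι × τ, ∑ q : ι × τ, (r p.1 q.1 ^ 2) * (f p * f q) := by
      simp [Finset.sum_add_distrib, Finset.sum_sub_distrib, mul_assoc]
    have g1 : ∑ p : ι × τ, ∑ q : ι × τ, (2 * r p.1 q.1) * d p q
        = ∑ i, ∑ j, 2 * r i j * D i j := by
      rw [group_sum (fun i j => 2 * r i j) d]
      exact Finset.sum_congr rfl fun i _ => Finset.sum_congr rfl fun j _ => by rw [h2]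
    have g2 : ∑ p : ι × τ, ∑ q : ι × τ, (r p.1 q.1 ^ 2) * (f p * f q)
        = ∑ i, ∑ j, r i j ^ 2 * (v i * v j) := by
      rw [group_sum (fun i j => r i j ^ 2) (fun p q => f p * f q)]
      refine Finset.sum_congr rfl fun i _ => Finset.sum_congr rfl fun j _ => ?_
      congr 1
      rw [← h1 i, ← h1 j, Finset.sum_mul_sum]
    have comb : ∀ i j, 2 * r i j * D i j - r i j ^ 2 * (v i * v j)
        = D i j ^ 2 / (v i * v j) := by
      intro i j
      have h := hvne i j
      rw [hr]
      field_simp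
      ring
    rw [e1, expand, g1, g2]
    have hc : (∑ i, ∑ j, 2 * r i j * D i j) - ∑ i, ∑ j, r i j ^ 2 * (v i * v j)
        = ∑ i, ∑ j, D i j ^ 2 / (v i * v j) := by
      rw [← Finset.sum_sub_distrib]
      refine Finset.sum_congr rfl fun i _ => ?_
      rw [← Finset.sum_sub_distrib]
      exact Finset.sum_congr rfl fun j _ => comb i j
    linarith
  -- Cauchy-Schwarz step
  set x : (ι × τ) × (ι × τ) → ℝ :=
    fun z => α z.1 * β z.2 * (Real.sqrt (f z.1) * Real.sqrt (f z.2)) with hx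
  set y : (ι × τ) × (ι × τ) → ℝ :=
    fun z => E z.1 z.2 / (Real.sqrt (f z.1) * Real.sqrt (f z.2)) with hy
  have hxy : ∀ z : (ι × τ) × (ι × τ), α z.1 * β z.2 * E z.1 z.2 = x z * y z := by
    intro z
    rcases eq_or_ne (f z.1 * f z.2) 0 with h | h
    · rw [hEzero z.1 z.2 h]
      have hs : Real.sqrt (f z.1) * Real.sqrt (f z.2) = 0 := by
        rcases mul_eq_zero.1 h with h' | h' <;> simp [h']
      show _ = _ * (E z.1 z.2 / _)
      rw [hEzero z.1 z.2 h, hs]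
      simp
    · obtain ⟨h1', h2'⟩ := mul_ne_zero_iff.1 h
      have hs : Real.sqrt (f z.1) * Real.sqrt (f z.2) ≠ 0 :=
        mul_ne_zero (Real.sqrt_ne_zero'.2 ((h4 z.1).lt_of_ne (Ne.symm h1')))
          (Real.sqrt_ne_zero'.2 ((h4 z.2).lt_of_ne (Ne.symm h2')))
      have hs1 := Real.sqrt_ne_zero'.2 ((h4 z.1).lt_of_ne (Ne.symm h1'))
      have hs2 := Real.sqrt_ne_zero'.2 ((h4 z.2).lt_of_ne (Ne.symm h2'))
      show α z.1 * β z.2 * E z.1 z.2 = α z.1 * β z.2 * (Real.sqrt (f z.1) * Real.sqrt (f z.2))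
          * (E z.1 z.2 / (Real.sqrt (f z.1) * Real.sqrt (f z.2)))
      field_simp
  have hSeq : ∑ p : ι × τ, ∑ q : ι × τ, α p * β q * E p q
      = ∑ z : (ι × τ) × (ι × τ), x z * y z := by
    conv_rhs => rw [Fintype.sum_prod_type]
    exact Finset.sum_congr rfl fun p _ => Finset.sum_congr rfl fun q _ => hxy (p, q)
  have hCS := Finset.sum_mul_sq_le_sq_mul_sq Finset.univ x y
  have hx2 : ∑ z : (ι × τ) × (ι × τ), x z ^ 2 ≤ 1 := by
    have hle : ∀ z : (ι × τ) × (ι × τ), x z ^ 2 ≤ f z.1 * f z.2 := by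
      intro z
      have e : x z ^ 2 = (α z.1 ^ 2 * β z.2 ^ 2) * (f z.1 * f z.2) := by
        show (α z.1 * β z.2 * (Real.sqrt (f z.1) * Real.sqrt (f z.2))) ^ 2 = _
        rw [mul_pow, mul_pow, mul_pow, Real.sq_sqrt (h4 z.1), Real.sq_sqrt (h4 z.2)]
      rw [e]
      have ha : α z.1 ^ 2 * β z.2 ^ 2 ≤ 1 := by
        rcases h6 z.1 with h' | h' <;> rcases h6' z.2 with h'' | h'' <;>
          simp [h', h'']
      nlinarith [mul_nonneg (h4 z.1) (h4 z.2), sq_nonneg (α z.1), sq_nonneg (β z.2)]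
    calc ∑ z : (ι × τ) × (ι × τ), x z ^ 2 ≤ ∑ z : (ι × τ) × (ι × τ), f z.1 * f z.2 :=
          Finset.sum_le_sum fun z _ => hle z
      _ = (∑ p : ι × τ, f p) * ∑ q : ι × τ, f q := by
          rw [Finset.sum_mul_sum, Fintype.sum_prod_type]
      _ = 1 := by
          have : ∑ p : ι × τ, f p = 1 := by
            rw [Fintype.sum_prod_type]
            rw [Finset.sum_congr rfl fun i (_ : i ∈ Finset.univ) => h1 i, h7]
          rw [this, one_mul]
  have hy2 : ∑ z : (ι × τ) × (ι × τ), y z ^ 2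
      = ∑ p : ι × τ, ∑ q : ι × τ, E p q ^ 2 / (f p * f q) := by
    rw [Fintype.sum_prod_type]
    refine Finset.sum_congr rfl fun p _ => Finset.sum_congr rfl fun q _ => ?_
    show (E p q / (Real.sqrt (f p) * Real.sqrt (f q))) ^ 2 = _
    rw [div_pow, mul_pow, Real.sq_sqrt (h4 p), Real.sq_sqrt (h4 q)]
  have hy2nn : (0:ℝ) ≤ ∑ z : (ι × τ) × (ι × τ), y z ^ 2 :=
    Finset.sum_nonneg fun z _ => sq_nonneg _
  have final : (∑ p : ι × τ, ∑ q : ι × τ, α p * β q * E p q) ^ 2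
      ≤ ∑ p : ι × τ, ∑ q : ι × τ, E p q ^ 2 / (f p * f q) := by
    calc (∑ p : ι × τ, ∑ q : ι × τ, α p * β q * E p q) ^ 2
        = (∑ z : (ι × τ) × (ι × τ), x z * y z) ^ 2 := by rw [hSeq]
      _ ≤ (∑ z, x z ^ 2) * ∑ z, y z ^ 2 := hCS
      _ ≤ 1 * ∑ z, y z ^ 2 := mul_le_mul_of_nonneg_right hx2 hy2nn
      _ = ∑ p : ι × τ, ∑ q : ι × τ, E p q ^ 2 / (f p * f q) := by rw [one_mul, hy2]
  have : (∑ p : ι × τ, ∑ q : ι × τ,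
      α p * β q * (d p q - D p.1 q.1 / (v p.1 * v q.1) * f p * f q))
      = ∑ p : ι × τ, ∑ q : ι × τ, α p * β q * E p q := rfl
  rw [this]
  linarith [final, key2.ge, key2.le]


section Main
open Function
variable {W : ℝ → ℝ → ℝ}

def Good {ι : Type*} [Fintype ι] (U : ι → Set ℝ) : Prop :=
  (∀ i, MeasurableSet (U i)) ∧ (∀ i, U i ⊆ Icc 0 1) ∧ (∀ i, 0 < vol (U i)) ∧
  Pairwise (Function.onFun Disjoint U) ∧ (⋃ i, U i) = Icc (0:ℝ) 1

noncomputable def idx (W : ℝ → ℝ → ℝ) {ι : Type*} [Fintype ι] (U : ι → Set ℝ) : ℝ :=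
  ∑ i, ∑ j, graphonDensity W (U i) (U j) ^ 2 / (vol (U i) * vol (U j))

noncomputable def dev (W : ℝ → ℝ → ℝ) {ι : Type*} [Fintype ι] (U : ι → Set ℝ)
    (A B : Set ℝ) : ℝ :=
  graphonDensity W A B - ∑ i, ∑ j, graphonDensity W (U i) (U j) / (vol (U i) * vol (U j))
    * vol (U i ∩ A) * vol (U j ∩ B)

lemma sum_vol_eq_one {ι : Type*} [Fintype ι] {U : ι → Set ℝ} (hU : Good U) :
    ∑ i, vol (U i) = 1 := by
  obtain ⟨mU, sU, pU, dU, uU⟩ := hU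
  rw [← vol_iUnion mU dU sU, uU]
  simp [vol, Real.volume_Icc]

lemma idx_le_one (hm : Measurable (fun p : ℝ × ℝ => W p.1 p.2))
    (hb : ∀ x y, W x y ∈ Icc (0:ℝ) 1) {ι : Type*} [Fintype ι] {U : ι → Set ℝ}
    (hU : Good U) : idx W U ≤ 1 := by
  obtain ⟨mU, sU, pU, dU, uU⟩ := hU
  have key : ∀ i j, graphonDensity W (U i) (U j) ^ 2 / (vol (U i) * vol (U j))
      ≤ vol (U i) * vol (U j) := by
    intro i j
    have h1 := den_nonneg hb (mU i) (mU j)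
    have h2 := den_le_vol hm hb (mU i) (mU j) (sU i) (sU j)
    have hv : 0 < vol (U i) * vol (U j) := mul_pos (pU i) (pU j)
    rw [div_le_iff₀ hv]
    nlinarith
  calc idx W U ≤ ∑ i, ∑ j, vol (U i) * vol (U j) :=
        Finset.sum_le_sum fun i _ => Finset.sum_le_sum fun j _ => key i j
    _ = (∑ i, vol (U i)) * ∑ j, vol (U j) := by rw [Finset.sum_mul_sum]
    _ = 1 := by rw [sum_vol_eq_one ⟨mU, sU, pU, dU, uU⟩]; norm_num

lemma idx_nonneg {ι : Type*} [Fintype ι] (U : ι → Set ℝ) : 0 ≤ idx W U :=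
  Finset.sum_nonneg fun i _ => Finset.sum_nonneg fun j _ =>
    div_nonneg (sq_nonneg _) (mul_nonneg (vol_nonneg _) (vol_nonneg _))

lemma reindex {ι κ : Type*} [Fintype ι] [Fintype κ] (e : κ ≃ ι) {U : ι → Set ℝ}
    (hU : Good U) : Good (U ∘ e) ∧ idx W (U ∘ e) = idx W U := by
  obtain ⟨mU, sU, pU, dU, uU⟩ := hU
  refine ⟨⟨fun i => mU _, fun i => sU _, fun i => pU _, ?_, ?_⟩, ?_⟩
  · intro i j hij
    exact dU (fun h => hij (e.injective h))
  · rw [← uU]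
    exact e.iSup_comp (g := U)
  · unfold idx
    rw [← e.sum_comp (fun i => ∑ j, graphonDensity W (U i) (U j) ^ 2 / (vol (U i) * vol (U j)))]
    exact Finset.sum_congr rfl fun i _ =>
      e.sum_comp fun j => graphonDensity W (U (e i)) (U j) ^ 2
        / (vol (U (e i)) * vol (U j))


lemma vol_congr {X Y : Set ℝ} (h : X =ᵐ[volume] (Y : Set ℝ)) : vol X = vol Y := by
  unfold vol
  rw [measure_congr h]

lemma aeeq_inter {X Y A : Set ℝ} (h : X =ᵐ[volume] Y) :
    (X ∩ A : Set ℝ) =ᵐ[volume] ((Y ∩ A : Set ℝ)) := by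
  rw [← measure_symmDiff_eq_zero_iff] at h ⊢
  refine measure_mono_null (fun x hx => ?_) h
  rw [Set.mem_symmDiff] at hx ⊢
  rcases hx with ⟨⟨h1, h2⟩, h3⟩ | ⟨⟨h1, h2⟩, h3⟩
  · exact Or.inl ⟨h1, fun hc => h3 ⟨hc, h2⟩⟩
  · exact Or.inr ⟨h1, fun hc => h3 ⟨hc, h2⟩⟩

lemma ae_union_null {X N : Set ℝ} (hN : volume N = 0) : (X ∪ N : Set ℝ) =ᵐ[volume] (X : Set ℝ) := by
  rw [← measure_symmDiff_eq_zero_iff]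
  refine measure_mono_null (fun x hx => ?_) hN
  rw [Set.mem_symmDiff] at hx
  rcases hx with ⟨h1, h2⟩ | ⟨h1, h2⟩
  · rcases h1 with h | h
    · exact absurd h h2
    · exact h
  · exact absurd (Or.inl h1) h2

lemma ae_empty_of_null {X : Set ℝ} (hX : volume X = 0) : (∅ : Set ℝ) =ᵐ[volume] (X : Set ℝ) :=
  (ae_eq_empty.2 hX).symm

lemma sum_subtype_of_zero {σ : Type*} [Fintype σ] (P : σ → Prop) [DecidablePred P]
    (g : σ → ℝ) (hg : ∀ p, ¬ P p → g p = 0) :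
    ∑ p : {x // P x}, g p.1 = ∑ p : σ, g p := by
  have h1 : ∑ p : {x // P x}, g p.1 = ∑ p ∈ Finset.univ.filter P, g p :=
    (Finset.sum_subtype (Finset.univ.filter P) (by simp) g).symm
  rw [h1]
  exact Finset.sum_filter_of_ne (fun x _ hx => by
    by_contra hP
    exact hx (hg x hP))

theorem refine_step (hm : Measurable (fun p : ℝ × ℝ => W p.1 p.2))
    (hb : ∀ x y, W x y ∈ Icc (0:ℝ) 1) {ι : Type*} [Fintype ι] {U : ι → Set ℝ}
    (hU : Good U) {A B : Set ℝ} (mA : MeasurableSet A) (mB : MeasurableSet B)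
    (hA : A ⊆ Icc 0 1) (hB : B ⊆ Icc 0 1) :
    ∃ (k' : ℕ) (V : Fin k' → Set ℝ), Good V ∧ k' ≤ 4 * Fintype.card ι ∧
      idx W U + dev W U A B ^ 2 ≤ idx W V := by
  classical
  obtain ⟨mU, sU, pU, dU, uU⟩ := hU
  set piece : ι → Bool × Bool → Set ℝ :=
    fun i s => U i ∩ (bif s.1 then A else Aᶜ) ∩ (bif s.2 then B else Bᶜ) with hpiece
  have condMeasA : ∀ a : Bool, MeasurableSet (bif a then A else Aᶜ) := by
    intro a; cases a; exacts [mA.compl, mA]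
  have condMeasB : ∀ a : Bool, MeasurableSet (bif a then B else Bᶜ) := by
    intro a; cases a; exacts [mB.compl, mB]
  have pm : ∀ i s, MeasurableSet (piece i s) := fun i s =>
    ((mU i).inter (condMeasA s.1)).inter (condMeasB s.2)
  have psub : ∀ i s, piece i s ⊆ U i := fun i s x hx => hx.1.1
  have psubIcc : ∀ i s, piece i s ⊆ Icc 0 1 := fun i s => (psub i s).trans (sU i)
  have hbool : ∀ (a b : Bool) (S : Set ℝ), a ≠ b →
      Disjoint (bif a then S else Sᶜ) (bif b then S else Sᶜ) := by
    intro a b S hab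
    cases a <;> cases b
    · exact absurd rfl hab
    · exact disjoint_compl_left
    · exact disjoint_compl_right
    · exact absurd rfl hab
  have pdisj : ∀ i, Pairwise (Function.onFun Disjoint (piece i)) := by
    intro i s t hst
    have hd : s.1 ≠ t.1 ∨ s.2 ≠ t.2 := by
      by_contra hc
      push_neg at hc
      exact hst (Prod.ext hc.1 hc.2)
    rcases hd with h | h
    · exact (hbool s.1 t.1 A h).mono (fun x hx => hx.1.2) (fun x hx => hx.1.2)
    · exact (hbool s.2 t.2 B h).mono (fun x hx => hx.2) (fun x hx => hx.2)
  have punion : ∀ i, ⋃ s : Bool × Bool, piece i s = U i := by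
    intro i
    apply Set.Subset.antisymm
    · exact Set.iUnion_subset fun s => psub i s
    · intro x hx
      by_cases hxA : x ∈ A <;> by_cases hxB : x ∈ B
      · exact Set.mem_iUnion.2 ⟨(true, true), ⟨⟨hx, hxA⟩, hxB⟩⟩
      · exact Set.mem_iUnion.2 ⟨(true, false), ⟨⟨hx, hxA⟩, hxB⟩⟩
      · exact Set.mem_iUnion.2 ⟨(false, true), ⟨⟨hx, hxA⟩, hxB⟩⟩
      · exact Set.mem_iUnion.2 ⟨(false, false), ⟨⟨hx, hxA⟩, hxB⟩⟩
  have pvol : ∀ i, ∑ s : Bool × Bool, vol (piece i s) = vol (U i) := by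
    intro i
    rw [← vol_iUnion (pm i) (pdisj i) (fun s => psubIcc i s), punion i]
  have pden : ∀ i j, ∑ s : Bool × Bool, ∑ t : Bool × Bool,
      graphonDensity W (piece i s) (piece j t) = graphonDensity W (U i) (U j) := by
    intro i j
    conv_rhs => rw [← punion i, ← punion j]
    rw [den_iUnion_left hm hb (pm i) (pdisj i) (psubIcc i)
      (MeasurableSet.iUnion (pm j)) (Set.iUnion_subset (psubIcc j))]
    exact Finset.sum_congr rfl fun s _ =>
      (den_iUnion_right hm hb (pm i s) (psubIcc i s) (pm j) (pdisj j) (psubIcc j)).symm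
  have exists_pos : ∀ i, ∃ s : Bool × Bool, 0 < vol (piece i s) := by
    intro i
    by_contra hc
    push_neg at hc
    have hle : ∑ s : Bool × Bool, vol (piece i s) ≤ 0 := Finset.sum_nonpos fun s _ => hc s
    rw [pvol i] at hle
    exact absurd (lt_of_lt_of_le (pU i) hle) (lt_irrefl 0)
  choose m hmpos using exists_pos
  have vol_zero : ∀ i s, ¬ 0 < vol (piece i s) → volume (piece i s) = 0 := by
    intro i s h
    have h0 : vol (piece i s) = 0 := le_antisymm (not_lt.1 h) (vol_nonneg _)
    rw [vol, ENNReal.toReal_eq_zero_iff] at h0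
    rcases h0 with h0 | h0
    · exact h0
    · exact absurd h0 (vol_ne_top (psubIcc i s))
  set N : ι → Set ℝ := fun i => ⋃ s : Bool × Bool,
    if 0 < vol (piece i s) then (∅ : Set ℝ) else piece i s with hN
  have Nnull : ∀ i, volume (N i) = 0 := by
    intro i
    refine measure_iUnion_null fun s => ?_
    by_cases h : 0 < vol (piece i s)
    · rw [if_pos h]; exact measure_empty
    · rw [if_neg h]; exact vol_zero i s h
  have Nsub : ∀ i, N i ⊆ U i := by
    intro i
    refine Set.iUnion_subset fun s => ?_
    by_cases h : 0 < vol (piece i s)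
    · rw [if_pos h]; exact Set.empty_subset _
    · rw [if_neg h]; exact psub i s
  have Nmeas : ∀ i, MeasurableSet (N i) := by
    intro i
    refine MeasurableSet.iUnion fun s => ?_
    by_cases h : 0 < vol (piece i s)
    · rw [if_pos h]; exact MeasurableSet.empty
    · rw [if_neg h]; exact pm i s
  set part : ι → Bool × Bool → Set ℝ := fun i s =>
    if s = m i then piece i (m i) ∪ N i
    else if 0 < vol (piece i s) then piece i s else ∅ with hpart
  have partm : ∀ i s, MeasurableSet (part i s) := by
    intro i s
    simp only [hpart]
    by_cases h1 : s = m i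
    · rw [if_pos h1]; exact (pm i (m i)).union (Nmeas i)
    · rw [if_neg h1]
      by_cases h2 : 0 < vol (piece i s)
      · rw [if_pos h2]; exact pm i s
      · rw [if_neg h2]; exact MeasurableSet.empty
  have partsub : ∀ i s, part i s ⊆ U i := by
    intro i s
    simp only [hpart]
    by_cases h1 : s = m i
    · rw [if_pos h1]; exact Set.union_subset (psub i (m i)) (Nsub i)
    · rw [if_neg h1]
      by_cases h2 : 0 < vol (piece i s)
      · rw [if_pos h2]; exact psub i s
      · rw [if_neg h2]; exact Set.empty_subset _
  have partsubIcc : ∀ i s, part i s ⊆ Icc 0 1 := fun i s => (partsub i s).trans (sU i)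
  have partae : ∀ i s, part i s =ᵐ[volume] piece i s := by
    intro i s
    simp only [hpart]
    by_cases h1 : s = m i
    · rw [if_pos h1, h1]
      exact ae_union_null (Nnull i)
    · rw [if_neg h1]
      by_cases h2 : 0 < vol (piece i s)
      · rw [if_pos h2]
        exact Filter.EventuallyEq.rfl
      · rw [if_neg h2]
        exact ae_empty_of_null (vol_zero i s h2)
  have partvol : ∀ i s, vol (part i s) = vol (piece i s) := fun i s =>
    vol_congr (partae i s)
  have partden : ∀ i j s t, graphonDensity W (part i s) (part j t)
      = graphonDensity W (piece i s) (piece j t) := fun i j s t =>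
    den_congr (partae i s) (partae j t)
  have Ndisj : ∀ i t, 0 < vol (piece i t) → Disjoint (N i) (piece i t) := by
    intro i t ht
    simp only [hN]
    refine Set.disjoint_iUnion_left.2 fun s' => ?_
    by_cases h : 0 < vol (piece i s')
    · rw [if_pos h]; exact disjoint_bot_left
    · rw [if_neg h]
      have hne : s' ≠ t := fun he => h (he ▸ ht)
      exact pdisj i hne
  have partdisj : ∀ i, Pairwise (Function.onFun Disjoint (part i)) := by
    intro i
    have main : ∀ s t : Bool × Bool, s ≠ t → t ≠ m i → Disjoint (part i s) (part i t) := by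
      intro s t hst htm
      by_cases hpos : 0 < vol (piece i t)
      · have hpt : part i t = piece i t := by simp only [hpart, if_neg htm, if_pos hpos]
        rw [hpt]
        by_cases hsm : s = m i
        · have hps : part i s = piece i (m i) ∪ N i := by simp only [hpart, if_pos hsm]
          rw [hps]
          refine Set.disjoint_union_left.2 ⟨?_, Ndisj i t hpos⟩
          have hne : m i ≠ t := Ne.symm htm
          exact pdisj i hne
        · have hps : part i s ⊆ piece i s := by
            simp only [hpart, if_neg hsm]
            by_cases h : 0 < vol (piece i s)
            · rw [if_pos h]
            · rw [if_neg h]; exact Set.empty_subset _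
          exact (pdisj i hst).mono hps subset_rfl
      · have hpt : part i t = ∅ := by simp only [hpart, if_neg htm, if_neg hpos]
        rw [hpt]
        exact disjoint_bot_right
    intro s t hst
    by_cases htm : t = m i
    · by_cases hsm : s = m i
      · exact absurd (hsm.trans htm.symm) hst
      · exact (main t s (Ne.symm hst) hsm).symm
    · exact main s t hst htm
  have partunion : ∀ i, ⋃ s : Bool × Bool, part i s = U i := by
    intro i
    apply Set.Subset.antisymm
    · exact Set.iUnion_subset (partsub i)
    · conv_lhs => rw [← punion i]
      intro x hx
      rcases Set.mem_iUnion.1 hx with ⟨s, hs⟩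
      by_cases hsm : s = m i
      · refine Set.mem_iUnion.2 ⟨m i, ?_⟩
        simp only [hpart, if_pos rfl]
        exact Or.inl (hsm ▸ hs)
      · by_cases h : 0 < vol (piece i s)
        · refine Set.mem_iUnion.2 ⟨s, ?_⟩
          simp only [hpart, if_neg hsm, if_pos h]
          exact hs
        · refine Set.mem_iUnion.2 ⟨m i, ?_⟩
          simp only [hpart, if_pos rfl]
          right
          simp only [hN]
          exact Set.mem_iUnion.2 ⟨s, by rw [if_neg h]; exact hs⟩
  have part_empty : ∀ (p : ι × (Bool × Bool)), ¬ 0 < vol (part p.1 p.2) → part p.1 p.2 = ∅ := by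
    rintro ⟨i, s⟩ h
    by_cases hsm : s = m i
    · exact absurd (by rw [partvol i s, hsm]; exact hmpos i) h
    · by_cases h2 : 0 < vol (piece i s)
      · exact absurd (by rw [partvol i s]; exact h2) h
      · simp only [hpart, if_neg hsm, if_neg h2]
  have partdisj_all : Pairwise (Function.onFun Disjoint
      (fun p : ι × (Bool × Bool) => part p.1 p.2)) := by
    rintro ⟨i, s⟩ ⟨j, t⟩ hpq
    by_cases hij : i = j
    · subst hij
      have hst : s ≠ t := fun h => hpq (by rw [h])
      exact partdisj i hst
    · exact (dU hij).mono (partsub i s) (partsub j t)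
  have partunion_all : ⋃ p : ι × (Bool × Bool), part p.1 p.2 = Icc (0:ℝ) 1 := by
    rw [Set.iUnion_prod']
    calc ⋃ i, ⋃ s, part i s = ⋃ i, U i := Set.iUnion_congr partunion
      _ = Icc 0 1 := uU
  -- interaction with A and B
  have interA : ∀ i (s : Bool × Bool),
      (part i s ∩ A : Set ℝ) =ᵐ[volume] ((bif s.1 then part i s else ∅ : Set ℝ)) := by
    intro i s
    have h1 : (part i s ∩ A : Set ℝ) =ᵐ[volume] ((piece i s ∩ A : Set ℝ)) := aeeq_inter (partae i s)
    cases hs : s.1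
    · have : piece i s ∩ A = ∅ := by
        apply Set.eq_empty_of_subset_empty
        intro x hx
        have hxc : x ∈ (Aᶜ : Set ℝ) := by
          have := hx.1.1.2
          rwa [hs] at this
        exact absurd hx.2 hxc
      exact (this ▸ h1 : _)
    · have : piece i s ∩ A = piece i s := by
        apply Set.inter_eq_left.2
        intro x hx
        have := hx.1.2
        rwa [hs] at this
      rw [this] at h1
      exact h1.trans (partae i s).symm
  have interB : ∀ i (s : Bool × Bool),
      (part i s ∩ B : Set ℝ) =ᵐ[volume] ((bif s.2 then part i s else ∅ : Set ℝ)) := by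
    intro i s
    have h1 : (part i s ∩ B : Set ℝ) =ᵐ[volume] ((piece i s ∩ B : Set ℝ)) := aeeq_inter (partae i s)
    cases hs : s.2
    · have : piece i s ∩ B = ∅ := by
        apply Set.eq_empty_of_subset_empty
        intro x hx
        have hxc : x ∈ (Bᶜ : Set ℝ) := by
          have := hx.1.2
          rwa [hs] at this
        exact absurd hx.2 hxc
      exact (this ▸ h1 : _)
    · have : piece i s ∩ B = piece i s := by
        apply Set.inter_eq_left.2
        intro x hx
        have := hx.2
        rwa [hs] at this
      rw [this] at h1
      exact h1.trans (partae i s).symm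
  have volA : ∀ i (s : Bool × Bool),
      vol (part i s ∩ A) = (if s.1 = true then (1:ℝ) else 0) * vol (part i s) := by
    intro i s
    rw [vol_congr (interA i s)]
    cases hs : s.1
    · simp [vol]
    · simp [vol]
  have volB : ∀ i (s : Bool × Bool),
      vol (part i s ∩ B) = (if s.2 = true then (1:ℝ) else 0) * vol (part i s) := by
    intro i s
    rw [vol_congr (interB i s)]
    cases hs : s.2
    · simp [vol]
    · simp [vol]
  have denAB : ∀ (p q : ι × (Bool × Bool)),
      graphonDensity W (part p.1 p.2 ∩ A) (part q.1 q.2 ∩ B)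
      = (if p.2.1 = true then (1:ℝ) else 0) * (if q.2.2 = true then (1:ℝ) else 0)
        * graphonDensity W (part p.1 p.2) (part q.1 q.2) := by
    intro p q
    rw [den_congr (interA p.1 p.2) (interB q.1 q.2)]
    cases hs : p.2.1 <;> cases ht : q.2.2
    · simp [den_empty_left]
    · simp [den_empty_left]
    · simp [den_empty_right]
    · simp
  -- good partition on subtype
  set P : ι × (Bool × Bool) → Prop := fun p => 0 < vol (part p.1 p.2) with hP
  set V : {p // P p} → Set ℝ := fun p => part p.1.1 p.1.2 with hV
  have goodV : Good V := by
    refine ⟨fun p => partm _ _, fun p => partsubIcc _ _, fun p => p.2, ?_, ?_⟩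
    · intro p q hpq
      exact partdisj_all (fun h => hpq (Subtype.ext h))
    · apply Set.Subset.antisymm
      · exact Set.iUnion_subset fun p => partsubIcc _ _
      · intro x hx
        rw [← partunion_all] at hx
        rcases Set.mem_iUnion.1 hx with ⟨p, hp⟩
        by_cases hPp : P p
        · exact Set.mem_iUnion.2 ⟨⟨p, hPp⟩, hp⟩
        · rw [part_empty p hPp] at hp
          exact absurd hp (Set.notMem_empty x)
  -- the core inequality
  have hcore := core (fun p : ι × (Bool × Bool) => vol (part p.1 p.2))
    (fun p q => graphonDensity W (part p.1 p.2) (part q.1 q.2))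
    (fun i => vol (U i)) (fun i j => graphonDensity W (U i) (U j))
    (fun p => if p.2.1 = true then (1:ℝ) else 0)
    (fun p => if p.2.2 = true then (1:ℝ) else 0)
    (fun i => by
      rw [Finset.sum_congr rfl fun s (_ : s ∈ Finset.univ) => partvol i s]
      exact pvol i)
    (fun i j => by
      rw [Finset.sum_congr rfl fun s (_ : s ∈ Finset.univ) =>
        Finset.sum_congr rfl fun t (_ : t ∈ Finset.univ) => partden i j s t]
      exact pden i j)
    (fun p q => den_nonneg hb (partm _ _) (partm _ _))
    (fun p q => den_le_vol hm hb (partm _ _) (partm _ _) (partsubIcc _ _) (partsubIcc _ _))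
    (fun p => vol_nonneg _) pU
    (fun p => by by_cases h : p.2.1 = true <;> simp [h])
    (fun p => by by_cases h : p.2.2 = true <;> simp [h])
    (sum_vol_eq_one ⟨mU, sU, pU, dU, uU⟩)
  -- identify the deviation
  have Adecomp : (⋃ p : ι × (Bool × Bool), (part p.1 p.2 ∩ A)) = A := by
    rw [← Set.iUnion_inter, partunion_all]
    exact Set.inter_eq_right.2 hA
  have Bdecomp : (⋃ p : ι × (Bool × Bool), (part p.1 p.2 ∩ B)) = B := by
    rw [← Set.iUnion_inter, partunion_all]
    exact Set.inter_eq_right.2 hB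
  have denA_expand : graphonDensity W A B
      = ∑ p : ι × (Bool × Bool), ∑ q : ι × (Bool × Bool),
        graphonDensity W (part p.1 p.2 ∩ A) (part q.1 q.2 ∩ B) := by
    conv_lhs => rw [← Adecomp, ← Bdecomp]
    rw [den_iUnion_left hm hb (fun p => (partm _ _).inter mA)
      (fun p q hpq => (partdisj_all hpq).mono Set.inter_subset_left Set.inter_subset_left)
      (fun p => Set.inter_subset_left.trans (partsubIcc _ _))
      (MeasurableSet.iUnion fun q => (partm _ _).inter mB)
      (Set.iUnion_subset fun q => Set.inter_subset_left.trans (partsubIcc _ _))]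
    exact Finset.sum_congr rfl fun p _ =>
      den_iUnion_right hm hb ((partm _ _).inter mA)
        (Set.inter_subset_left.trans (partsubIcc _ _))
        (fun q => (partm _ _).inter mB)
        (fun q q' hq => (partdisj_all hq).mono Set.inter_subset_left Set.inter_subset_left)
        (fun q => Set.inter_subset_left.trans (partsubIcc _ _))
  have volUA : ∀ i, vol (U i ∩ A) = ∑ s : Bool × Bool, vol (part i s ∩ A) := by
    intro i
    rw [← partunion i, Set.iUnion_inter, vol_iUnion (fun s => (partm i s).inter mA)
      (fun s t hst => (partdisj i hst).mono Set.inter_subset_left Set.inter_subset_left)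
      (fun s => Set.inter_subset_left.trans (partsubIcc i s))]
  have volUB : ∀ i, vol (U i ∩ B) = ∑ s : Bool × Bool, vol (part i s ∩ B) := by
    intro i
    rw [← partunion i, Set.iUnion_inter, vol_iUnion (fun s => (partm i s).inter mB)
      (fun s t hst => (partdisj i hst).mono Set.inter_subset_left Set.inter_subset_left)
      (fun s => Set.inter_subset_left.trans (partsubIcc i s))]
  have hdev : ∑ p : ι × (Bool × Bool), ∑ q : ι × (Bool × Bool),
      (if p.2.1 = true then (1:ℝ) else 0) * (if q.2.2 = true then (1:ℝ) else 0)
        * (graphonDensity W (part p.1 p.2) (part q.1 q.2)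
          - graphonDensity W (U p.1) (U q.1) / (vol (U p.1) * vol (U q.1))
            * vol (part p.1 p.2) * vol (part q.1 q.2))
      = dev W U A B := by
    have split : ∀ (p q : ι × (Bool × Bool)),
        (if p.2.1 = true then (1:ℝ) else 0) * (if q.2.2 = true then (1:ℝ) else 0)
          * (graphonDensity W (part p.1 p.2) (part q.1 q.2)
            - graphonDensity W (U p.1) (U q.1) / (vol (U p.1) * vol (U q.1))
              * vol (part p.1 p.2) * vol (part q.1 q.2))
        = graphonDensity W (part p.1 p.2 ∩ A) (part q.1 q.2 ∩ B)
          - graphonDensity W (U p.1) (U q.1) / (vol (U p.1) * vol (U q.1))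
            * (vol (part p.1 p.2 ∩ A) * vol (part q.1 q.2 ∩ B)) := by
      intro p q
      rw [denAB p q, volA p.1 p.2, volB q.1 q.2]
      ring
    rw [Finset.sum_congr rfl fun p (_ : p ∈ Finset.univ) =>
      Finset.sum_congr rfl fun q (_ : q ∈ Finset.univ) => split p q]
    have e2 : ∑ p : ι × (Bool × Bool), ∑ q : ι × (Bool × Bool),
        graphonDensity W (U p.1) (U q.1) / (vol (U p.1) * vol (U q.1))
          * (vol (part p.1 p.2 ∩ A) * vol (part q.1 q.2 ∩ B))
        = ∑ i, ∑ j, graphonDensity W (U i) (U j) / (vol (U i) * vol (U j))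
            * vol (U i ∩ A) * vol (U j ∩ B) := by
      rw [group_sum (fun i j => graphonDensity W (U i) (U j) / (vol (U i) * vol (U j)))
        (fun p q => vol (part p.1 p.2 ∩ A) * vol (part q.1 q.2 ∩ B))]
      refine Finset.sum_congr rfl fun i _ => Finset.sum_congr rfl fun j _ => ?_
      rw [← Finset.sum_mul_sum, ← volUA i, ← volUB j]
      ring
    simp only [Finset.sum_sub_distrib]
    rw [← denA_expand, e2]
    rfl
  have idx_full : idx W V = ∑ p : ι × (Bool × Bool), ∑ q : ι × (Bool × Bool),
      graphonDensity W (part p.1 p.2) (part q.1 q.2) ^ 2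
        / (vol (part p.1 p.2) * vol (part q.1 q.2)) := by
    have inner : ∀ p : ι × (Bool × Bool), ∑ q' : {x // P x},
        graphonDensity W (part p.1 p.2) (part q'.1.1 q'.1.2) ^ 2
          / (vol (part p.1 p.2) * vol (part q'.1.1 q'.1.2))
        = ∑ q : ι × (Bool × Bool), graphonDensity W (part p.1 p.2) (part q.1 q.2) ^ 2
          / (vol (part p.1 p.2) * vol (part q.1 q.2)) := by
      intro p
      exact sum_subtype_of_zero P
        (fun q => graphonDensity W (part p.1 p.2) (part q.1 q.2) ^ 2
          / (vol (part p.1 p.2) * vol (part q.1 q.2)))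
        (fun q hq => by
          show graphonDensity W (part p.1 p.2) (part q.1 q.2) ^ 2
            / (vol (part p.1 p.2) * vol (part q.1 q.2)) = 0
          rw [part_empty q hq, den_empty_right]
          simp)
    calc idx W V = ∑ p' : {x // P x}, ∑ q' : {x // P x},
          graphonDensity W (part p'.1.1 p'.1.2) (part q'.1.1 q'.1.2) ^ 2
            / (vol (part p'.1.1 p'.1.2) * vol (part q'.1.1 q'.1.2)) := rfl
      _ = ∑ p' : {x // P x}, ∑ q : ι × (Bool × Bool),
          graphonDensity W (part p'.1.1 p'.1.2) (part q.1 q.2) ^ 2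
            / (vol (part p'.1.1 p'.1.2) * vol (part q.1 q.2)) :=
          Finset.sum_congr rfl fun p' _ => inner p'.1
      _ = ∑ p : ι × (Bool × Bool), ∑ q : ι × (Bool × Bool),
          graphonDensity W (part p.1 p.2) (part q.1 q.2) ^ 2
            / (vol (part p.1 p.2) * vol (part q.1 q.2)) := by
          refine sum_subtype_of_zero P
            (fun p => ∑ q : ι × (Bool × Bool),
              graphonDensity W (part p.1 p.2) (part q.1 q.2) ^ 2
                / (vol (part p.1 p.2) * vol (part q.1 q.2)))
            (fun p hp => Finset.sum_eq_zero fun q _ => by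
              show graphonDensity W (part p.1 p.2) (part q.1 q.2) ^ 2
                / (vol (part p.1 p.2) * vol (part q.1 q.2)) = 0
              rw [part_empty p hp, den_empty_left]
              simp)
  have hidxU : idx W U = ∑ i, ∑ j, graphonDensity W (U i) (U j) ^ 2
      / (vol (U i) * vol (U j)) := rfl
  obtain ⟨goodV', idxV'⟩ := reindex (W := W) (Fintype.equivFin {p // P p}).symm goodV
  refine ⟨Fintype.card {p // P p}, V ∘ (Fintype.equivFin {p // P p}).symm, goodV', ?_, ?_⟩
  · calc Fintype.card {p // P p} ≤ Fintype.card (ι × (Bool × Bool)) :=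
        Fintype.card_subtype_le _
      _ = 4 * Fintype.card ι := by
          rw [Fintype.card_prod, Fintype.card_prod, Fintype.card_bool]
          ring
  · rw [idxV', idx_full]
    beta_reduce at hcore
    rw [hdev, hidxU.symm] at hcore
    linarith


end Main

lemma regular_iff {W : ℝ → ℝ → ℝ} {ε : ℝ} {k : ℕ} {U : Fin k → Set ℝ} :
    IsWeakRegularPartition W ε k U ↔ (Good U ∧ ∀ A B : Set ℝ, MeasurableSet A →
      MeasurableSet B → A ⊆ Icc 0 1 → B ⊆ Icc 0 1 → |dev W U A B| ≤ ε) :=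
  ⟨fun ⟨a, b, c, d, e, f⟩ => ⟨⟨a, b, c, d, e⟩, f⟩, fun ⟨⟨a, b, c, d, e⟩, f⟩ => ⟨a, b, c, d, e, f⟩⟩

lemma step (hm : Measurable (fun p : ℝ × ℝ => W p.1 p.2))
    (hb : ∀ x y, W x y ∈ Icc (0:ℝ) 1) {c δ : ℝ} (hδ : 0 < δ)
    (H : ∀ (k : ℕ) (U : Fin k → Set ℝ), IsWeakRegularPartition W δ k U →
      (2:ℝ) ^ (c * δ ^ (-2:ℤ)) ≤ k)
    {k : ℕ} {U : Fin k → Set ℝ} (hU : Good U)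
    (hk : (k : ℝ) < (2:ℝ) ^ (c * δ ^ (-2:ℤ))) :
    ∃ (k' : ℕ) (V : Fin k' → Set ℝ), Good V ∧ k' ≤ 4 * k ∧ idx W U + δ ^ 2 ≤ idx W V := by
  have hnr : ¬ IsWeakRegularPartition W δ k U := fun hreg => absurd (H k U hreg) (not_le.2 hk)
  rw [regular_iff] at hnr
  push_neg at hnr
  obtain ⟨A, B, mA, mB, hA, hB, hdev⟩ := hnr hU
  obtain ⟨k', V, hV, hk', hidx⟩ := refine_step hm hb hU mA mB hA hB
  refine ⟨k', V, hV, by simpa using hk', ?_⟩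
  have h1 : δ ^ 2 < dev W U A B ^ 2 := by
    have := pow_lt_pow_left₀ hdev (le_of_lt hδ) two_ne_zero
    rwa [sq_abs] at this
  linarith

lemma chain (hm : Measurable (fun p : ℝ × ℝ => W p.1 p.2))
    (hb : ∀ x y, W x y ∈ Icc (0:ℝ) 1) {c δ : ℝ} (hδ : 0 < δ)
    (H : ∀ (k : ℕ) (U : Fin k → Set ℝ), IsWeakRegularPartition W δ k U →
      (2:ℝ) ^ (c * δ ^ (-2:ℤ)) ≤ k) :
    ∀ (n : ℕ) {k : ℕ} {U : Fin k → Set ℝ}, Good U →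
      (∀ m : ℕ, m < n → ((4 ^ m * k : ℕ) : ℝ) < (2:ℝ) ^ (c * δ ^ (-2:ℤ))) →
      ∃ (k' : ℕ) (V : Fin k' → Set ℝ), Good V ∧ k' ≤ 4 ^ n * k ∧
        idx W U + n * δ ^ 2 ≤ idx W V := by
  intro n
  induction n with
  | zero => exact fun hU _ => ⟨_, _, hU, by simp, by simp⟩
  | succ n ih =>
    intro k U hU hth
    obtain ⟨k', V, hV, hk', hidx⟩ := ih hU (fun m hmn => hth m (hmn.trans (Nat.lt_succ_self n)))
    have hk'2 : (k' : ℝ) < (2:ℝ) ^ (c * δ ^ (-2:ℤ)) :=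
      lt_of_le_of_lt (by exact_mod_cast hk') (hth n (Nat.lt_succ_self n))
    obtain ⟨k'', V', hV', hk'', hidx'⟩ := step hm hb hδ H hV hk'2
    refine ⟨k'', V', hV', ?_, ?_⟩
    · calc k'' ≤ 4 * k' := hk''
        _ ≤ 4 * (4 ^ n * k) := by omega
        _ = 4 ^ (n + 1) * k := by ring
    · push_cast
      push_cast at hidx
      linarith

lemma scale_step (hm : Measurable (fun p : ℝ × ℝ => W p.1 p.2))
    (hb : ∀ x y, W x y ∈ Icc (0:ℝ) 1) {c : ℝ} (hc : 0 < c) {ε : ℕ → ℝ}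
    (hεpos : ∀ i, 0 < ε i) (hε0 : Filter.Tendsto ε Filter.atTop (nhds 0))
    (H : ∀ i (k : ℕ) (U : Fin k → Set ℝ), IsWeakRegularPartition W (ε i) k U →
      (2:ℝ) ^ (c * (ε i) ^ (-2:ℤ)) ≤ k)
    {k : ℕ} {U : Fin k → Set ℝ} (hU : Good U) :
    ∃ (k' : ℕ) (V : Fin k' → Set ℝ), Good V ∧ idx W U + c / 4 ≤ idx W V := by
  have hxpos : (0:ℝ) < c / (2 * (2 + k)) := by positivity
  have hr : 0 < Real.sqrt (c / (2 * (2 + k))) := Real.sqrt_pos.2 hxpos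
  obtain ⟨i, hi⟩ : ∃ i, ε i < Real.sqrt (c / (2 * (2 + k))) :=
    (hε0.eventually (gt_mem_nhds hr)).exists
  set δ := ε i with hδdef
  have hδ : 0 < δ := hεpos i
  have hδ2 : (0:ℝ) < δ ^ 2 := pow_pos hδ 2
  have hδsq : δ ^ 2 < c / (2 * (2 + k)) := by
    have h1 := Real.sq_sqrt hxpos.le
    nlinarith [Real.sqrt_nonneg (c / (2 * (2 + k)))]
  have hexp : c * δ ^ (-2:ℤ) = c / δ ^ 2 := by
    have h1 : δ ^ (-2:ℤ) = (δ ^ (2:ℕ))⁻¹ := by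
      rw [← zpow_natCast δ 2, ← zpow_neg]
      norm_num
    rw [h1, div_eq_mul_inv]
  have hhalf : (2:ℝ) + k < (c / 2) / δ ^ 2 := by
    rw [lt_div_iff₀ hδ2]
    have h2k : (0:ℝ) < 2 + k := by positivity
    rw [lt_div_iff₀ (by positivity : (0:ℝ) < 2 * (2 + (k:ℝ)))] at hδsq
    nlinarith
  set n := ⌈(c / 4) / δ ^ 2⌉₊ with hn
  have hth : ∀ m : ℕ, m < n → ((4 ^ m * k : ℕ) : ℝ) < (2:ℝ) ^ (c * δ ^ (-2:ℤ)) := by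
    intro m hmn
    have hm1 : (m : ℝ) < (c / 4) / δ ^ 2 := by
      have hle : (m : ℝ) + 1 ≤ n := by exact_mod_cast Nat.succ_le_of_lt hmn
      have hceil : (n : ℝ) < (c / 4) / δ ^ 2 + 1 := Nat.ceil_lt_add_one (by positivity)
      linarith
    have h4m : ((4 ^ m : ℕ) : ℝ) < (2:ℝ) ^ ((c / 2) / δ ^ 2) := by
      have e1 : ((4 ^ m : ℕ) : ℝ) = (2:ℝ) ^ ((2 * m : ℕ) : ℝ) := by
        rw [Real.rpow_natCast]
        push_cast
        rw [pow_mul]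
        norm_num
      rw [e1]
      rw [Real.rpow_lt_rpow_left_iff one_lt_two]
      have he : (c / 2) / δ ^ 2 = 2 * ((c / 4) / δ ^ 2) := by ring
      push_cast
      linarith
    have hk2 : (k : ℝ) < (2:ℝ) ^ ((c / 2) / δ ^ 2) := by
      have e1 : (k : ℝ) < (2:ℝ) ^ ((k : ℕ) : ℝ) := by
        rw [Real.rpow_natCast]
        exact_mod_cast Nat.lt_two_pow_self
      refine e1.trans_le ?_
      rw [Real.rpow_le_rpow_left_iff one_lt_two]
      have : (k : ℝ) ≤ 2 + k := by linarith
      linarith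
    have hprod : ((4 ^ m * k : ℕ) : ℝ)
        < (2:ℝ) ^ ((c / 2) / δ ^ 2) * (2:ℝ) ^ ((c / 2) / δ ^ 2) := by
      push_cast
      have h4nn : (0:ℝ) ≤ ((4:ℝ) ^ m) := by positivity
      have hknn : (0:ℝ) ≤ (k : ℝ) := Nat.cast_nonneg k
      exact mul_lt_mul'' (by exact_mod_cast h4m) hk2 h4nn hknn
    refine hprod.trans_le (le_of_eq ?_)
    rw [← Real.rpow_add two_pos, hexp]
    congr 1
    field_simp
    ring
  obtain ⟨k', V, hGV, _, hidx⟩ := chain hm hb hδ (H i) n hU hth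
  have hnge : c / 4 ≤ (n : ℝ) * δ ^ 2 := by
    have := Nat.le_ceil ((c / 4) / δ ^ 2)
    rw [← hn] at this
    calc c / 4 = ((c / 4) / δ ^ 2) * δ ^ 2 := by
          field_simp
      _ ≤ (n : ℝ) * δ ^ 2 := by
          apply mul_le_mul_of_nonneg_right this hδ2.le
  exact ⟨k', V, hGV, by linarith⟩

lemma trivial_partition : Good (fun _ : Fin 1 => Icc (0:ℝ) 1) := by
  refine ⟨fun _ => measurableSet_Icc, fun _ => subset_rfl, fun _ => ?_, ?_, ?_⟩
  · simp [vol, Real.volume_Icc]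
  · intro i j hij
    exact absurd (Subsingleton.elim i j) hij
  · exact Set.iUnion_const _

lemma escalate (hm : Measurable (fun p : ℝ × ℝ => W p.1 p.2))
    (hb : ∀ x y, W x y ∈ Icc (0:ℝ) 1) {c : ℝ} (hc : 0 < c) {ε : ℕ → ℝ}
    (hεpos : ∀ i, 0 < ε i) (hε0 : Filter.Tendsto ε Filter.atTop (nhds 0))
    (H : ∀ i (k : ℕ) (U : Fin k → Set ℝ), IsWeakRegularPartition W (ε i) k U →
      (2:ℝ) ^ (c * (ε i) ^ (-2:ℤ)) ≤ k) :
    ∀ N : ℕ, ∃ (k : ℕ) (U : Fin k → Set ℝ), Good U ∧ (N : ℝ) * (c / 4) ≤ idx W U := by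
  intro N
  induction N with
  | zero => exact ⟨1, _, trivial_partition, by simpa using idx_nonneg (W := W) _⟩
  | succ N ih =>
    obtain ⟨k, U, hU, hidx⟩ := ih
    obtain ⟨k', V, hV, hidx'⟩ := scale_step hm hb hc hεpos hε0 H hU
    refine ⟨k', V, hV, ?_⟩
    push_cast
    linarith

end Aux

theorem stmt13 :
    ¬ ∃ (W : ℝ → ℝ → ℝ) (c : ℝ) (ε : ℕ → ℝ),
      Measurable (fun p : ℝ × ℝ => W p.1 p.2) ∧ (∀ x y, W x y = W y x) ∧
      (∀ x y, W x y ∈ Set.Icc (0:ℝ) 1) ∧ 0 < c ∧ (∀ i, 0 < ε i) ∧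
      Filter.Tendsto ε Filter.atTop (nhds 0) ∧
      ∀ i k (U : Fin k → Set ℝ), IsWeakRegularPartition W (ε i) k U →
        (2:ℝ)^(c * (ε i)^(-2:ℤ)) ≤ k := by
  rintro ⟨W, c, ε, hm, _, hb, hc, hεpos, hε0, H⟩
  set N := ⌈4 / c⌉₊ + 1 with hN
  obtain ⟨k, U, hU, hidx⟩ := Aux.escalate hm (fun x y => hb x y) hc hεpos hε0 H N
  have h1 : Aux.idx W U ≤ 1 := Aux.idx_le_one hm (fun x y => hb x y) hU
  have h2 : 4 / c < (N : ℝ) := by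
    rw [hN]
    push_cast
    exact lt_of_le_of_lt (Nat.le_ceil _) (lt_add_one _)
  have h3 : (1:ℝ) < (N : ℝ) * (c / 4) := by
    have h4 : (4:ℝ) < (N:ℝ) * c := (div_lt_iff₀ hc).1 h2
    linarith
  linarith
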